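/- Let l : 2^V → ℝ be submodular with l(∅) = 0. Then for every s ∈ ℝ^p the Lovász extension equals the maximum of the permutation sums: ℓ̂(s) = max over all permutations σ of {1,…,p} of G_l(σ, s); equivalently, for every permutation σ and every permutation π sorting s in decreasing order, G_l(σ, s) ≤ G_l(π, s). -/
import Mathlib


open Finset

/-- The chain {σ₁,…,σⱼ}: the image under σ of the first j indices. -/
def chainSet {p : ℕ} (σ : Equiv.Perm (Fin p)) (j : ℕ) : Finset (Fin p) :=
  (Finset.univ.filter fun k : Fin p => (k : ℕ) < j).image σ

/-- G_l(σ, s) = Σ_{j=1}^p s_{σ_j}·(l({σ₁,…,σⱼ}) − l({σ₁,…,σ_{j−1}})). -/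
def lovaszSum {p : ℕ} (l : Finset (Fin p) → ℝ) (σ : Equiv.Perm (Fin p))
    (s : Fin p → ℝ) : ℝ :=
  ∑ j : Fin p, s (σ j) * (l (chainSet σ ((j : ℕ) + 1)) - l (chainSet σ (j : ℕ)))

/-- Indicator vector 1_A ∈ {0,1}^p of A ⊆ V. -/
def indic {p : ℕ} (A : Finset (Fin p)) : Fin p → ℝ := fun i => if i ∈ A then 1 else 0

/-- A permutation sorting s in decreasing order: s_{π_1} ≥ … ≥ s_{π_p}. -/
def SortsDesc {p : ℕ} (π : Equiv.Perm (Fin p)) (s : Fin p → ℝ) : Prop :=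
  ∀ j k : Fin p, j ≤ k → s (π k) ≤ s (π j)

/-- A canonical permutation sorting s in decreasing order. -/
noncomputable def sortDesc {p : ℕ} (s : Fin p → ℝ) : Equiv.Perm (Fin p) :=
  Tuple.sort (fun i => -s i)

/-- The Lovász extension ℓ̂(s) = G_l(π, s) for a permutation π sorting s
decreasingly (independent of the choice of such π). -/
noncomputable def lovaszExt {p : ℕ} (l : Finset (Fin p) → ℝ) (s : Fin p → ℝ) : ℝ :=
  lovaszSum l (sortDesc s) s

/-- Submodularity: l(A) + l(B) ≥ l(A ∪ B) + l(A ∩ B). -/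
def Submodular {p : ℕ} (l : Finset (Fin p) → ℝ) : Prop :=
  ∀ A B : Finset (Fin p), l (A ∪ B) + l (A ∩ B) ≤ l A + l B

/-- The slack-rescaling surrogate S_l(s) = max_{I⊆V} l(I)·(1 − 2 Σ_{i∈I}(1 − s_i)). -/
noncomputable def slackSur {p : ℕ} (l : Finset (Fin p) → ℝ) (s : Fin p → ℝ) : ℝ :=
  Finset.univ.sup' Finset.univ_nonempty
    (fun I : Finset (Fin p) => l I * (1 - 2 * ∑ i ∈ I, (1 - s i)))

/-- The margin-rescaling surrogate M_l(s) = max_{I⊆V} ( l(I) − 2 Σ_{i∈I}(1 − s_i) ). -/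
noncomputable def marginSur {p : ℕ} (l : Finset (Fin p) → ℝ) (s : Fin p → ℝ) : ℝ :=
  Finset.univ.sup' Finset.univ_nonempty
    (fun I : Finset (Fin p) => l I - 2 * ∑ i ∈ I, (1 - s i))

/-- The Lovász hinge, general (non-monotonic) case. -/
noncomputable def hingeGen {p : ℕ} (l : Finset (Fin p) → ℝ) (s : Fin p → ℝ) : ℝ :=
  Finset.univ.sup' Finset.univ_nonempty
    (fun σ : Equiv.Perm (Fin p) => max 0 (lovaszSum l σ s))

/-- The Lovász hinge, increasing case (componentwise thresholding). -/
noncomputable def hingeInc {p : ℕ} (l : Finset (Fin p) → ℝ) (s : Fin p → ℝ) : ℝ :=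
  Finset.univ.sup' Finset.univ_nonempty
    (fun σ : Equiv.Perm (Fin p) =>
      ∑ j : Fin p, max (s (σ j)) 0 *
        (l (chainSet σ ((j : ℕ) + 1)) - l (chainSet σ (j : ℕ))))

section aux2
variable {p : ℕ}

lemma chainSet_zero (σ : Equiv.Perm (Fin p)) : chainSet σ 0 = ∅ := by simp [chainSet]

lemma mem_chainSet (σ : Equiv.Perm (Fin p)) (i : Fin p) (m : ℕ) :
    σ i ∈ chainSet σ m ↔ (i : ℕ) < m := by
  simp [chainSet, σ.injective.eq_iff, eq_comm]

lemma mem_chainSet' (σ : Equiv.Perm (Fin p)) (x : Fin p) (m : ℕ) :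
    x ∈ chainSet σ m ↔ ((σ.symm x : Fin p) : ℕ) < m := by
  have := mem_chainSet σ (σ.symm x) m
  simpa using this

lemma chainSet_top (σ : Equiv.Perm (Fin p)) : chainSet σ p = Finset.univ := by
  ext x
  simp [mem_chainSet' σ x p, Fin.is_lt]

lemma chainSet_mono (σ : Equiv.Perm (Fin p)) {m m' : ℕ} (h : m ≤ m') :
    chainSet σ m ⊆ chainSet σ m' := by
  intro x hx
  rw [mem_chainSet'] at hx ⊢
  omega

lemma chainSet_succ (σ : Equiv.Perm (Fin p)) (j : Fin p) :
    chainSet σ ((j : ℕ) + 1) = insert (σ j) (chainSet σ (j : ℕ)) := by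
  ext x
  rw [mem_chainSet', Finset.mem_insert, mem_chainSet']
  constructor
  · intro h
    rcases Nat.lt_succ_iff_lt_or_eq.mp h with h' | h'
    · exact Or.inr h'
    · left
      have : σ.symm x = j := Fin.ext h'
      rw [← this]; simp
  · rintro (rfl | h)
    · simp
    · omega


lemma fin_sum_eq_range {p : ℕ} (F : Fin p → ℝ) (G : ℕ → ℝ) (h : ∀ j : Fin p, F j = G (j : ℕ)) :
    ∑ j : Fin p, F j = ∑ j ∈ Finset.range p, G j := by
  rw [← Fin.sum_univ_eq_sum_range G p]
  exact Finset.sum_congr rfl fun j _ => h j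

/-- The `σ`-marginal of `B`. -/
noncomputable def WB (l : Finset (Fin p) → ℝ) (σ : Equiv.Perm (Fin p))
    (B : Finset (Fin p)) : ℝ :=
  ∑ j : Fin p, if σ j ∈ B then l (chainSet σ ((j : ℕ) + 1)) - l (chainSet σ (j : ℕ)) else 0

lemma WB_le (l : Finset (Fin p) → ℝ) (hsub : Submodular l) (h0 : l ∅ = 0)
    (σ : Equiv.Perm (Fin p)) (B : Finset (Fin p)) : WB l σ B ≤ l B := by
  have key : ∀ j : Fin p,
      (if σ j ∈ B then l (chainSet σ ((j : ℕ) + 1)) - l (chainSet σ (j : ℕ)) else 0)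
        ≤ l (B ∩ chainSet σ ((j : ℕ) + 1)) - l (B ∩ chainSet σ (j : ℕ)) := by
    intro j
    by_cases hj : σ j ∈ B
    · rw [if_pos hj]
      have hu : chainSet σ (j : ℕ) ∪ (B ∩ chainSet σ ((j : ℕ) + 1))
          = chainSet σ ((j : ℕ) + 1) := by
        apply Finset.Subset.antisymm
        · exact Finset.union_subset (chainSet_mono σ (Nat.le_succ _))
            Finset.inter_subset_right
        · rw [chainSet_succ]
          apply Finset.insert_subset
          · apply Finset.mem_union_right
            exact Finset.mem_inter.mpr ⟨hj, Finset.mem_insert_self _ _⟩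
          · exact Finset.subset_union_left
      have hi : chainSet σ (j : ℕ) ∩ (B ∩ chainSet σ ((j : ℕ) + 1))
          = B ∩ chainSet σ (j : ℕ) := by
        rw [Finset.inter_left_comm]
        congr 1
        exact Finset.inter_eq_left.mpr (chainSet_mono σ (Nat.le_succ _))
      have := hsub (chainSet σ (j : ℕ)) (B ∩ chainSet σ ((j : ℕ) + 1))
      rw [hu, hi] at this
      linarith
    · rw [if_neg hj]
      have : B ∩ chainSet σ ((j : ℕ) + 1) = B ∩ chainSet σ (j : ℕ) := by
        rw [chainSet_succ]
        ext x
        simp only [Finset.mem_inter, Finset.mem_insert]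
        constructor
        · rintro ⟨hb, rfl | hc⟩
          · exact absurd hb hj
          · exact ⟨hb, hc⟩
        · rintro ⟨hb, hc⟩; exact ⟨hb, Or.inr hc⟩
      rw [this]
      simp
  calc WB l σ B ≤ ∑ j : Fin p,
        (l (B ∩ chainSet σ ((j : ℕ) + 1)) - l (B ∩ chainSet σ (j : ℕ))) :=
      Finset.sum_le_sum fun j _ => key j
    _ = ∑ j ∈ Finset.range p,
        (l (B ∩ chainSet σ (j + 1)) - l (B ∩ chainSet σ j)) :=
      fin_sum_eq_range _ _ (fun j => rfl)
    _ = l (B ∩ chainSet σ p) - l (B ∩ chainSet σ 0) :=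
      Finset.sum_range_sub (fun m => l (B ∩ chainSet σ m)) p
    _ = l B := by rw [chainSet_top, chainSet_zero]; simp [h0]

lemma WB_chain_self (l : Finset (Fin p) → ℝ) (h0 : l ∅ = 0)
    (π : Equiv.Perm (Fin p)) (m : ℕ) (hm : m ≤ p) :
    WB l π (chainSet π m) = l (chainSet π m) := by
  unfold WB
  have h1 : ∀ j : Fin p, (π j ∈ chainSet π m) ↔ (j : ℕ) < m := fun j => mem_chainSet π j m
  calc (∑ j : Fin p, if π j ∈ chainSet π m then
          l (chainSet π ((j : ℕ) + 1)) - l (chainSet π (j : ℕ)) else 0)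
      = ∑ j : Fin p, if (j : ℕ) < m then
          l (chainSet π ((j : ℕ) + 1)) - l (chainSet π (j : ℕ)) else 0 := by
        apply Finset.sum_congr rfl
        intro j _
        rw [if_congr (h1 j) rfl rfl]
    _ = ∑ j ∈ Finset.range p, if j < m then
          l (chainSet π (j + 1)) - l (chainSet π j) else 0 :=
      fin_sum_eq_range _ _ (fun j => rfl)
    _ = ∑ j ∈ Finset.range m, if j < m then
          l (chainSet π (j + 1)) - l (chainSet π j) else 0 := by
        symm
        apply Finset.sum_subset (Finset.range_subset_range.mpr hm)
        intro x _ hx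
        rw [Finset.mem_range] at hx
        rw [if_neg hx]
    _ = ∑ j ∈ Finset.range m, (l (chainSet π (j + 1)) - l (chainSet π j)) := by
        apply Finset.sum_congr rfl
        intro j hj
        rw [Finset.mem_range] at hj
        rw [if_pos hj]
    _ = l (chainSet π m) - l (chainSet π 0) :=
        Finset.sum_range_sub (fun m => l (chainSet π m)) m
    _ = l (chainSet π m) := by rw [chainSet_zero]; simp [h0]

end aux2

section main
variable {p : ℕ}

/-- The vertex weight `w^σ_i`. -/
noncomputable def wvec (l : Finset (Fin p) → ℝ) (σ : Equiv.Perm (Fin p)) (i : Fin p) : ℝ :=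
  l (chainSet σ ((σ.symm i : Fin p) + 1)) - l (chainSet σ ((σ.symm i : Fin p) : ℕ))

lemma wvec_apply (l : Finset (Fin p) → ℝ) (σ : Equiv.Perm (Fin p)) (j : Fin p) :
    wvec l σ (σ j) = l (chainSet σ ((j : ℕ) + 1)) - l (chainSet σ (j : ℕ)) := by
  simp [wvec]

lemma WB_eq_sum_ite (l : Finset (Fin p) → ℝ) (σ : Equiv.Perm (Fin p)) (B : Finset (Fin p)) :
    WB l σ B = ∑ i : Fin p, if i ∈ B then wvec l σ i else 0 := by
  unfold WB
  rw [← Equiv.sum_comp σ (fun i => if i ∈ B then wvec l σ i else 0)]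
  apply Finset.sum_congr rfl
  intro j _
  rw [wvec_apply]

lemma lovaszSum_eq (l : Finset (Fin p) → ℝ) (σ : Equiv.Perm (Fin p)) (s : Fin p → ℝ) :
    lovaszSum l σ s = ∑ i : Fin p, s i * wvec l σ i := by
  unfold lovaszSum
  rw [← Equiv.sum_comp σ (fun i => s i * wvec l σ i)]
  apply Finset.sum_congr rfl
  intro j _
  rw [wvec_apply]

theorem lovasz_max_aux (p : ℕ) (hp : 1 ≤ p)
    (l : Finset (Fin p) → ℝ) (hsub : Submodular l) (h0 : l ∅ = 0)
    (s : Fin p → ℝ) (π : Equiv.Perm (Fin p)) (hπ : SortsDesc π s)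
    (σ : Equiv.Perm (Fin p)) : lovaszSum l σ s ≤ lovaszSum l π s := by
  classical
  set f : ℕ → ℝ := fun i => if h : i < p then s (π ⟨i, h⟩) else 0 with hf
  have key : ∀ τ : Equiv.Perm (Fin p),
      lovaszSum l τ s = f (p - 1) * WB l τ Finset.univ
        - ∑ i ∈ Finset.range (p - 1), (f (i + 1) - f i) * WB l τ (chainSet π (i + 1)) := by
    intro τ
    set g : ℕ → ℝ := fun i => if h : i < p then wvec l τ (π ⟨i, h⟩) else 0 with hg
    have hG : ∀ m : ℕ, m ≤ p → ∑ i ∈ Finset.range m, g i = WB l τ (chainSet π m) := by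
      intro m hm
      rw [WB_eq_sum_ite]
      rw [← Equiv.sum_comp π (fun i => if i ∈ chainSet π m then wvec l τ i else 0)]
      have : ∀ j : Fin p, (if π j ∈ chainSet π m then wvec l τ (π j) else 0)
          = (if (j : ℕ) < m then wvec l τ (π j) else 0) := by
        intro j
        rw [if_congr (mem_chainSet π j m) rfl rfl]
      rw [Finset.sum_congr rfl fun j _ => this j]
      rw [fin_sum_eq_range (fun j : Fin p => if (j : ℕ) < m then wvec l τ (π j) else 0)
        (fun j => if j < m then g j else 0)
        (fun j => by by_cases hjm : (j : ℕ) < m <;> simp [hjm, hg, j.isLt])]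
      symm
      rw [← Finset.sum_subset (Finset.range_subset_range.mpr hm)
        (fun x _ hx => by rw [Finset.mem_range] at hx; rw [if_neg hx])]
      apply Finset.sum_congr rfl
      intro j hj
      rw [Finset.mem_range] at hj
      rw [if_pos hj]
    have h1 : lovaszSum l τ s = ∑ i ∈ Finset.range p, f i * g i := by
      rw [lovaszSum_eq, ← Equiv.sum_comp π (fun i => s i * wvec l τ i)]
      exact fin_sum_eq_range (fun j : Fin p => s (π j) * wvec l τ (π j))
        (fun i => f i * g i)
        (fun j => by simp [hf, hg, j.isLt])
    rw [h1]
    have := Finset.sum_range_by_parts f g p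
    simp only [smul_eq_mul] at this
    rw [this, hG p (le_refl p), chainSet_top]
    congr 1
    apply Finset.sum_congr rfl
    intro i hi
    rw [Finset.mem_range] at hi
    rw [hG (i + 1) (by omega)]
  rw [key σ, key π]
  have huniv : WB l σ Finset.univ = WB l π Finset.univ := by
    have h1 : WB l σ Finset.univ = l Finset.univ := by
      have := WB_chain_self l h0 σ p (le_refl p)
      rwa [chainSet_top] at this
    have h2 : WB l π Finset.univ = l Finset.univ := by
      have := WB_chain_self l h0 π p (le_refl p)
      rwa [chainSet_top] at this
    rw [h1, h2]
  rw [huniv]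
  apply sub_le_sub_left
  apply Finset.sum_le_sum
  intro i hi
  rw [Finset.mem_range] at hi
  have hcoef : f (i + 1) - f i ≤ 0 := by
    have hi1 : i + 1 < p := by omega
    have hi0 : i < p := by omega
    rw [hf]
    simp only [dif_pos hi1, dif_pos hi0]
    have := hπ ⟨i, hi0⟩ ⟨i + 1, hi1⟩ (by simp [Fin.le_def])
    linarith
  have hWB : WB l σ (chainSet π (i + 1)) ≤ WB l π (chainSet π (i + 1)) := by
    rw [WB_chain_self l h0 π (i + 1) (by omega)]
    exact WB_le l hsub h0 σ _
  nlinarith [mul_le_mul_of_nonpos_left hWB hcoef]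

end main

/-- the Lovász extension is the maximum over permutations of the
permutation sums: for every permutation σ and every permutation π sorting s in
decreasing order, G_l(σ, s) ≤ G_l(π, s). -/
theorem lovasz_eq_max_over_permutations (p : ℕ) (hp : 1 ≤ p)
    (l : Finset (Fin p) → ℝ) (hsub : Submodular l) (h0 : l ∅ = 0)
    (s : Fin p → ℝ) (π : Equiv.Perm (Fin p)) (hπ : SortsDesc π s) :
    ∀ σ : Equiv.Perm (Fin p), lovaszSum l σ s ≤ lovaszSum l π s := by
  intro σ
  exact lovasz_max_aux p hp l hsub h0 s π hπ σ
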